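/- Let p > 1, let h : [0,∞) → ℝ be continuous with h(s) > 0 for s > 0, and assume lim_{t→∞} t^{-(p+1)/2} ∫_0^t s^{p+1} h(s) ds = ∞. Define for c > 0 the energy E(c) = inf over nonzero w ∈ H¹₀(0,c) of (∫_0^c |w'|² ds) / (∫_0^c h(s)|w|^{p+1} ds)^{2/(p+1)}. Then E(c) → 0 as c → ∞. -/

import Mathlib

open Real Filter Set

theorem stmt_1 (p : ℝ) (hp : 1 < p) (h : ℝ → ℝ)
    (hcont : ContinuousOn h (Set.Ici 0))
    (hpos : ∀ s : ℝ, 0 < s → 0 < h s)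
    (hlim : Tendsto (fun t : ℝ => t ^ (-(p + 1) / 2) * ∫ s in (0:ℝ)..t, s ^ (p + 1) * h s)
      atTop atTop)
    (E : ℝ → ℝ)
    (hE : ∀ c : ℝ, 0 < c → E c = sInf { R : ℝ | ∃ w : ℝ → ℝ, ContDiff ℝ 1 w ∧
      w 0 = 0 ∧ w c = 0 ∧ (∃ s ∈ Set.Ioo 0 c, w s ≠ 0) ∧
      R = (∫ s in (0:ℝ)..c, (deriv w s) ^ 2) /
          (∫ s in (0:ℝ)..c, h s * |w s| ^ (p + 1)) ^ (2 / (p + 1)) }) :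
    Tendsto E atTop (nhds 0) := by
  have hp1 : (0:ℝ) < p + 1 := by linarith
  set q : ℝ := 2 / (p + 1) with hq
  have hq0 : 0 < q := by positivity
  -- h is nonnegative on [0, ∞)
  have h0 : ∀ s : ℝ, 0 ≤ s → 0 ≤ h s := by
    intro s hs
    rcases eq_or_lt_of_le hs with rfl | hs'
    · have hc0 : Tendsto h (nhdsWithin 0 (Set.Ioi 0)) (nhds (h 0)) :=
        (hcont 0 (Set.mem_Ici.mpr le_rfl)).tendsto.mono_left
          (nhdsWithin_mono _ Set.Ioi_subset_Ici_self)
      exact ge_of_tendsto hc0 (eventually_mem_nhdsWithin.mono fun u hu => (hpos u hu).le)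
    · exact (hpos s hs').le
  -- continuity of x ↦ x ^ (p+1)
  have hrpc : Continuous (fun x : ℝ => x ^ (p + 1)) :=
    continuous_iff_continuousAt.mpr fun x =>
      Real.continuousAt_rpow_const x _ (Or.inr hp1.le)
  set F : ℝ → ℝ := fun t => ∫ s in (0:ℝ)..t, s ^ (p + 1) * h s with hF
  set A : ℝ → ℝ := fun t => t ^ (-(p + 1) / 2) * F t with hA
  set g : ℝ → ℝ := fun c => 8 / (A (c / 2)) ^ q with hg
  have hhalf : Tendsto (fun c : ℝ => c / 2) atTop atTop :=
    tendsto_id.atTop_div_const two_pos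
  have hAat : Tendsto (fun c : ℝ => A (c / 2)) atTop atTop := hlim.comp hhalf
  have hgto : Tendsto g atTop (nhds 0) :=
    tendsto_const_nhds.div_atTop ((tendsto_rpow_atTop hq0).comp hAat)
  -- main eventual bound
  have key : ∀ c : ℝ, 2 ≤ c → 1 ≤ A (c / 2) → 0 ≤ E c ∧ E c ≤ g c := by
    intro c hc2 hA1
    have hc0 : (0:ℝ) < c := by linarith
    set S := { R : ℝ | ∃ w : ℝ → ℝ, ContDiff ℝ 1 w ∧
      w 0 = 0 ∧ w c = 0 ∧ (∃ s ∈ Set.Ioo 0 c, w s ≠ 0) ∧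
      R = (∫ s in (0:ℝ)..c, (deriv w s) ^ 2) /
          (∫ s in (0:ℝ)..c, h s * |w s| ^ (p + 1)) ^ (2 / (p + 1)) } with hS
    have hEc : E c = sInf S := hE c hc0
    -- every element of S is nonnegative
    have hSnn : ∀ R ∈ S, 0 ≤ R := by
      rintro R ⟨w, -, -, -, -, rfl⟩
      apply div_nonneg
      · exact intervalIntegral.integral_nonneg hc0.le fun u _ => sq_nonneg _
      · exact Real.rpow_nonneg
          (intervalIntegral.integral_nonneg hc0.le fun u hu =>
            mul_nonneg (h0 u hu.1) (Real.rpow_nonneg (abs_nonneg _) _)) _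
    -- the test function
    set w : ℝ → ℝ := fun s => s * (c - s) with hw
    have hwc : ContDiff ℝ 1 w := contDiff_id.mul (contDiff_const.sub contDiff_id)
    have hderiv : ∀ s : ℝ, deriv w s = c - 2 * s := by
      intro s
      have : HasDerivAt w (1 * (c - s) + s * (0 - 1)) s :=
        (hasDerivAt_id s).mul ((hasDerivAt_const s c).sub (hasDerivAt_id s))
      have := this.deriv
      rw [this]; ring
    set R₀ : ℝ := (∫ s in (0:ℝ)..c, (deriv w s) ^ 2) /
          (∫ s in (0:ℝ)..c, h s * |w s| ^ (p + 1)) ^ (2 / (p + 1)) with hR₀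
    have hmem : R₀ ∈ S := by
      refine ⟨w, hwc, by simp [hw], by simp [hw], ⟨c/2, ⟨half_pos hc0, half_lt_self hc0⟩, ?_⟩, rfl⟩
      have : w (c/2) = c/2 * (c - c/2) := rfl
      rw [this]
      have : c - c/2 = c/2 := by ring
      rw [this]
      exact ne_of_gt (mul_pos (half_pos hc0) (half_pos hc0))
    have hne : S.Nonempty := ⟨R₀, hmem⟩
    have hbdd : BddBelow S := ⟨0, fun R hR => hSnn R hR⟩
    have hE0 : 0 ≤ E c := hEc ▸ le_csInf hne hSnn
    have hER : E c ≤ R₀ := hEc ▸ csInf_le hbdd hmem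
    refine ⟨hE0, hER.trans ?_⟩
    -- now bound R₀ ≤ g c
    -- numerator bound
    have hnum : (∫ s in (0:ℝ)..c, (deriv w s) ^ 2) ≤ c ^ 3 := by
      have h1 : (∫ s in (0:ℝ)..c, (deriv w s) ^ 2) ≤ ∫ _ in (0:ℝ)..c, c ^ 2 := by
        apply intervalIntegral.integral_mono_on hc0.le
        · have : Continuous fun s : ℝ => (c - 2 * s) ^ 2 := (continuous_const.sub (continuous_const.mul continuous_id)).pow 2
          have heq : (fun s => (deriv w s) ^ 2) = fun s => (c - 2 * s) ^ 2 := by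
            funext s; rw [hderiv s]
          rw [heq]
          exact this.intervalIntegrable 0 c
        · exact intervalIntegrable_const
        · intro x hx
          rw [hderiv x]
          exact sq_le_sq' (by linarith [hx.1, hx.2]) (by linarith [hx.1, hx.2])
      calc (∫ s in (0:ℝ)..c, (deriv w s) ^ 2) ≤ ∫ _ in (0:ℝ)..c, c ^ 2 := h1
        _ = c ^ 2 * c := by simp [mul_comm]
        _ = c ^ 3 := by ring
    -- denominator bound
    set den : ℝ := ∫ s in (0:ℝ)..c, h s * |w s| ^ (p + 1) with hden
    have hcontw : Continuous fun s : ℝ => |w s| ^ (p + 1) :=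
      hrpc.comp (continuous_abs.comp (continuous_id.mul (continuous_const.sub continuous_id)))
    have hint : ∀ a b : ℝ, 0 ≤ a → 0 ≤ b →
        IntervalIntegrable (fun s => h s * |w s| ^ (p + 1)) MeasureTheory.volume a b := by
      intro a b ha hb
      apply ContinuousOn.intervalIntegrable
      apply ContinuousOn.mul
      · exact hcont.mono fun x hx => by
          rcases Set.mem_uIcc.mp hx with ⟨h1, _⟩ | ⟨h1, _⟩ <;> exact Set.mem_Ici.mpr (by linarith)
      · exact hcontw.continuousOn
    have hFint : ∀ a b : ℝ, IntervalIntegrable (fun s => s ^ (p + 1) * h s)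
        MeasureTheory.volume a b → True := fun _ _ _ => trivial
    have hc2' : c / 2 ≤ c := by linarith
    have hc20 : (0:ℝ) < c / 2 := half_pos hc0
    -- split integral
    have hsplit : (∫ s in (0:ℝ)..(c/2), h s * |w s| ^ (p + 1))
        + (∫ s in (c/2)..c, h s * |w s| ^ (p + 1)) = den :=
      intervalIntegral.integral_add_adjacent_intervals (hint 0 (c/2) le_rfl hc20.le)
        (hint (c/2) c hc20.le hc0.le)
    have hsecond : 0 ≤ ∫ s in (c/2)..c, h s * |w s| ^ (p + 1) :=
      intervalIntegral.integral_nonneg hc2' fun u hu =>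
        mul_nonneg (h0 u (by linarith [hu.1])) (Real.rpow_nonneg (abs_nonneg _) _)
    have hfirst : (c/2) ^ (p+1) * F (c/2) ≤ ∫ s in (0:ℝ)..(c/2), h s * |w s| ^ (p + 1) := by
      have hmono : (∫ s in (0:ℝ)..(c/2), h s * (s * (c/2)) ^ (p + 1))
          ≤ ∫ s in (0:ℝ)..(c/2), h s * |w s| ^ (p + 1) := by
        apply intervalIntegral.integral_mono_on hc20.le
        · apply ContinuousOn.intervalIntegrable
          apply ContinuousOn.mul
          · exact hcont.mono fun x hx => by
              rcases Set.mem_uIcc.mp hx with ⟨h1, _⟩ | ⟨h1, _⟩ <;>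
                exact Set.mem_Ici.mpr (by linarith [hc20.le])
          · exact (hrpc.comp (continuous_id.mul continuous_const)).continuousOn
        · exact hint 0 (c/2) le_rfl hc20.le
        · intro x hx
          apply mul_le_mul_of_nonneg_left _ (h0 x hx.1)
          apply Real.rpow_le_rpow (mul_nonneg hx.1 hc20.le) _ hp1.le
          have hwx : w x = x * (c - x) := rfl
          rw [abs_of_nonneg (by nlinarith [hx.1, hx.2] : (0:ℝ) ≤ w x), hwx]
          have : c / 2 ≤ c - x := by linarith [hx.2]
          nlinarith [hx.1]
      have heq : (∫ s in (0:ℝ)..(c/2), h s * (s * (c/2)) ^ (p + 1))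
          = (c/2) ^ (p+1) * F (c/2) := by
        have : (∫ s in (0:ℝ)..(c/2), h s * (s * (c/2)) ^ (p + 1))
            = ∫ s in (0:ℝ)..(c/2), (c/2) ^ (p+1) * (s ^ (p + 1) * h s) := by
          apply intervalIntegral.integral_congr
          intro x hx
          rw [Set.uIcc_of_le hc20.le] at hx
          show h x * (x * (c/2)) ^ (p + 1) = (c/2) ^ (p+1) * (x ^ (p + 1) * h x)
          rw [Real.mul_rpow hx.1 hc20.le]
          ring
        rw [this, intervalIntegral.integral_const_mul]
      rw [← heq]; exact hmono
    have hdenge : (c/2) ^ (p+1) * F (c/2) ≤ den := by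
      rw [← hsplit]; linarith
    -- F (c/2) in terms of A
    have hArw : A (c/2) = ((c/2) ^ ((p+1)/2))⁻¹ * F (c/2) := by
      show (c/2) ^ (-(p+1)/2) * F (c/2) = _
      rw [show -(p+1)/2 = -((p+1)/2) from by ring, Real.rpow_neg hc20.le]
    have hFA : F (c/2) = (c/2) ^ ((p + 1) / 2) * A (c/2) := by
      rw [hArw, ← mul_assoc, mul_inv_cancel₀ (ne_of_gt (Real.rpow_pos_of_pos hc20 _)), one_mul]
    have hA0 : (0:ℝ) < A (c/2) := lt_of_lt_of_le one_pos hA1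
    have hF0 : 0 < F (c/2) := by
      rw [hFA]; positivity
    have hD0 : 0 < (c/2) ^ (p+1) * F (c/2) := by positivity
    have hden0 : 0 < den := lt_of_lt_of_le hD0 hdenge
    -- rpow computation: ((c/2)^(p+1) * F(c/2))^q = (c/2)^3 * (A (c/2))^q
    have hDq : ((c/2) ^ (p+1) * F (c/2)) ^ q = (c/2)^3 * (A (c/2)) ^ q := by
      rw [hFA, Real.mul_rpow (by positivity) (by positivity),
        Real.mul_rpow (by positivity) hA0.le,
        ← Real.rpow_mul hc20.le, ← Real.rpow_mul hc20.le]
      have e1 : (p+1) * q = 2 := by rw [hq]; field_simp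
      have e2 : (p+1)/2 * q = 1 := by rw [hq]; field_simp
      rw [e1, e2, Real.rpow_one,
        show (2:ℝ) = ((2:ℕ):ℝ) by norm_num, Real.rpow_natCast]
      ring
    -- chain of inequalities
    have hdenq : ((c/2) ^ (p+1) * F (c/2)) ^ q ≤ den ^ q :=
      Real.rpow_le_rpow hD0.le hdenge hq0.le
    have hDq0 : 0 < ((c/2) ^ (p+1) * F (c/2)) ^ q := Real.rpow_pos_of_pos hD0 _
    have hnum0 : 0 ≤ ∫ s in (0:ℝ)..c, (deriv w s) ^ 2 :=
      intervalIntegral.integral_nonneg hc0.le fun u _ => sq_nonneg _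
    calc R₀ = (∫ s in (0:ℝ)..c, (deriv w s) ^ 2) / den ^ q := by rw [hR₀]
      _ ≤ c ^ 3 / (((c/2) ^ (p+1) * F (c/2)) ^ q) := by
          exact div_le_div₀ (by positivity) hnum hDq0 hdenq
      _ = 8 / (A (c/2)) ^ q := by
          rw [hDq]
          have hAq0 : (0:ℝ) < (A (c/2)) ^ q := Real.rpow_pos_of_pos hA0 _
          field_simp
          ring
      _ = g c := rfl
  -- conclude by squeeze
  have hev : ∀ᶠ c : ℝ in atTop, 0 ≤ E c ∧ E c ≤ g c := by
    filter_upwards [eventually_ge_atTop (2:ℝ), hAat.eventually_ge_atTop 1] with c h1 h2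
    exact key c h1 h2
  exact squeeze_zero' (hev.mono fun c hc => hc.1) (hev.mono fun c hc => hc.2) hgto
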